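/- The central monoid (F₃, ⋄) is cancellative: for all f, g, h ∈ F₃, f ⋄ g = f ⋄ h implies g = h, and g ⋄ f = h ⋄ f implies g = h. -/

import Mathlib

open Set
open scoped Classical

noncomputable section

/-- An address: a finite word in the alphabet `{0,1,2}`. -/
abbrev Address : Type := List (Fin 3)

/-- Left endpoint of the triadic interval `I_α`. -/
def addrLeft : Address → ℝ
  | [] => 0
  | i :: α => ((i : ℕ) : ℝ) / 3 + addrLeft α / 3

/-- Length of the triadic interval `I_α`. -/
def addrLen (α : Address) : ℝ := (1 / 3 : ℝ) ^ α.length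

/-- The triadic subinterval `I_α ⊆ [0,1]` determined by the address `α`. -/
def Iaddr (α : Address) : Set ℝ := Set.Icc (addrLeft α) (addrLeft α + addrLen α)

/-- The linear orientation-preserving isomorphism `ψ_α : I_α → [0,1]`. -/
def psi (α : Address) (t : ℝ) : ℝ := (t - addrLeft α) / addrLen α

/-- The inverse `ψ_α⁻¹ : [0,1] → I_α`. -/
def psiInv (α : Address) (t : ℝ) : ℝ := addrLeft α + addrLen α * t

/-- `φ_α(f)` acts as `ψ_α⁻¹ ∘ f ∘ ψ_α` on `I_α` and as the identity elsewhere. -/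
def phi (α : Address) (f : ℝ → ℝ) : ℝ → ℝ :=
  fun t => if t ∈ Iaddr α then psiInv α (f (psi α t)) else t

/-- A triadic rational. -/
def IsTriadic (q : ℝ) : Prop := ∃ a : ℤ, ∃ n : ℕ, q = (a : ℝ) / 3 ^ n

/-- Membership in the Brown–Thompson group `F₃`, realized as piecewise-linear
homeomorphisms of `[0,1]` (extended by the identity to all of `ℝ`) with breakpoints
at triadic rationals and slopes powers of `3`. The group product is `f·g = g ∘ f`. -/
def IsF3 (f : ℝ → ℝ) : Prop :=
  (∀ t, t ∉ Set.Icc (0 : ℝ) 1 → f t = t) ∧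
  Set.BijOn f (Set.Icc 0 1) (Set.Icc 0 1) ∧
  StrictMonoOn f (Set.Icc 0 1) ∧
  ∃ breaks : Finset ℝ, (∀ b ∈ breaks, IsTriadic b) ∧
    ∀ x ∈ Set.Icc (0 : ℝ) 1, x ∉ breaks →
      ∃ (k : ℤ) (c : ℝ), IsTriadic c ∧
        ∀ᶠ y in nhdsWithin x (Set.Icc 0 1), f y = (3 : ℝ) ^ k * y + c

/-- `f` maps `I_α` linearly (preserving orientation, with triadic affine data)
onto the triadic interval `I_β`. -/
def IsTriadicLinearOn (f : ℝ → ℝ) (α β : Address) : Prop :=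
  ∀ t ∈ Iaddr α, f t = psiInv β (psi α t)

/-- The depth of the maximal all-`i` leaf of the reduced domain tree of `f`:
the least `n` such that `f` maps `I_{iⁿ}` linearly onto a triadic interval. -/
def leafExp (i : Fin 3) (f : ℝ → ℝ) : ℕ :=
  sInf {n : ℕ | ∃ β : Address, IsTriadicLinearOn f (List.replicate n i) β}

/-- The address `l(f) = 1ⁿ` of the central leaf of `f` (the leaf of the reduced
domain tree whose interval contains `1/2`). -/
def centralLeaf (f : ℝ → ℝ) : Address := List.replicate (leafExp 1 f) 1

/-- The central monoid operation `f ⋄ g = φ_{l(f)}(g) · f` (recall `a·b = b ∘ a`). -/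
def diam (f g : ℝ → ℝ) : ℝ → ℝ := fun t => f (phi (centralLeaf f) g t)

/-! ### Basic lemmas -/

lemma addrLen_pos (α : Address) : 0 < addrLen α := by
  unfold addrLen; positivity

lemma addrLen_ne (α : Address) : addrLen α ≠ 0 := (addrLen_pos α).ne'

lemma addrLen_le_one (α : Address) : addrLen α ≤ 1 :=
  pow_le_one₀ (by norm_num) (by norm_num)

lemma addrLeft_cons (i : Fin 3) (α : Address) :
    addrLeft (i :: α) = ((i : ℕ) : ℝ) / 3 + addrLeft α / 3 := rfl

lemma addrLen_cons (i : Fin 3) (α : Address) : addrLen (i :: α) = addrLen α / 3 := by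
  unfold addrLen; rw [List.length_cons, pow_succ]; ring

lemma psi_psiInv (α : Address) (t : ℝ) : psi α (psiInv α t) = t := by
  unfold psi psiInv; field_simp [addrLen_ne α]; ring

lemma psiInv_psi (α : Address) (t : ℝ) : psiInv α (psi α t) = t := by
  unfold psi psiInv; field_simp [addrLen_ne α]; ring

lemma psiInv_zero (α : Address) : psiInv α 0 = addrLeft α := by simp [psiInv]

lemma psiInv_one (α : Address) : psiInv α 1 = addrLeft α + addrLen α := by simp [psiInv]

lemma psi_left (α : Address) : psi α (addrLeft α) = 0 := by simp [psi]

lemma psi_right (α : Address) : psi α (addrLeft α + addrLen α) = 1 := by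
  unfold psi; field_simp [addrLen_ne α]; ring

lemma mem_Iaddr_iff (α : Address) (t : ℝ) : t ∈ Iaddr α ↔ psi α t ∈ Icc (0:ℝ) 1 := by
  have hl := addrLen_pos α
  simp only [Iaddr, psi, Set.mem_Icc]
  rw [le_div_iff₀ hl, div_le_one hl]
  constructor <;> intro hh <;> constructor <;> linarith [hh.1, hh.2]

lemma psiInv_mem (α : Address) {t : ℝ} (ht : t ∈ Icc (0:ℝ) 1) : psiInv α t ∈ Iaddr α := by
  rw [mem_Iaddr_iff, psi_psiInv]; exact ht

lemma addrLeft_nonneg (α : Address) : 0 ≤ addrLeft α := by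
  induction α with
  | nil => simp [addrLeft]
  | cons i α ih => unfold addrLeft; positivity

lemma addrLeft_add_len_le_one (α : Address) : addrLeft α + addrLen α ≤ 1 := by
  induction α with
  | nil => simp [addrLeft, addrLen]
  | cons i α ih =>
    have hi : ((i : ℕ) : ℝ) ≤ 2 := by
      have := i.isLt; exact_mod_cast Nat.lt_succ_iff.mp this
    rw [addrLeft_cons, addrLen_cons]
    linarith

lemma Iaddr_subset_unit (α : Address) : Iaddr α ⊆ Icc (0:ℝ) 1 := by
  intro t ht
  obtain ⟨h1, h2⟩ := ht
  exact ⟨le_trans (addrLeft_nonneg α) h1, le_trans h2 (addrLeft_add_len_le_one α)⟩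

lemma addrLen_append (α δ : Address) : addrLen (α ++ δ) = addrLen α * addrLen δ := by
  unfold addrLen; rw [List.length_append, pow_add]

lemma addrLeft_append (α δ : Address) :
    addrLeft (α ++ δ) = addrLeft α + addrLen α * addrLeft δ := by
  induction α with
  | nil => simp [addrLeft, addrLen]
  | cons i α ih =>
    show addrLeft (i :: (α ++ δ)) = _
    rw [addrLeft_cons, addrLeft_cons, addrLen_cons, ih]; ring

lemma psi_append (α δ : Address) (t : ℝ) : psi (α ++ δ) t = psi δ (psi α t) := by
  unfold psi
  rw [addrLeft_append, addrLen_append]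
  have h1 := addrLen_ne α
  have h2 := addrLen_ne δ
  field_simp
  ring

lemma psiInv_append (α δ : Address) (t : ℝ) : psiInv (α ++ δ) t = psiInv α (psiInv δ t) := by
  unfold psiInv
  rw [addrLeft_append, addrLen_append]; ring

lemma mem_Iaddr_append (α δ : Address) (t : ℝ) :
    t ∈ Iaddr (α ++ δ) ↔ psi α t ∈ Iaddr δ := by
  rw [mem_Iaddr_iff, mem_Iaddr_iff δ, psi_append]

lemma Iaddr_append_subset (α δ : Address) : Iaddr (α ++ δ) ⊆ Iaddr α := by
  intro t ht
  rw [mem_Iaddr_append] at ht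
  rw [mem_Iaddr_iff]
  exact Iaddr_subset_unit δ ht

lemma addrLeft_replicate (n : ℕ) :
    addrLeft (List.replicate n 1) = (1 - (1/3:ℝ)^n) / 2 := by
  induction n with
  | zero => simp [addrLeft]
  | succ n ih =>
    rw [List.replicate_succ, addrLeft_cons, ih]
    norm_num
    ring

lemma addrLen_replicate (n : ℕ) : addrLen (List.replicate n 1) = (1/3:ℝ)^n := by
  unfold addrLen; rw [List.length_replicate]

lemma addrLeft_mul_pow (α : Address) : ∃ d : ℕ, addrLeft α * 3 ^ α.length = (d : ℝ) := by
  induction α with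
  | nil => exact ⟨0, by simp [addrLeft]⟩
  | cons i α ih =>
    obtain ⟨d, hd⟩ := ih
    refine ⟨(i : ℕ) * 3 ^ α.length + d, ?_⟩
    rw [addrLeft_cons, List.length_cons, pow_succ]
    push_cast
    rw [← hd]
    ring

lemma exists_address (L : ℕ) : ∀ d : ℕ, d < 3 ^ L →
    ∃ β : Address, β.length = L ∧ addrLeft β * 3 ^ L = (d : ℝ) := by
  induction L with
  | zero =>
    intro d hd
    interval_cases d
    exact ⟨[], rfl, by simp [addrLeft]⟩
  | succ L ih =>
    intro d hd
    have hpos : 0 < 3 ^ L := Nat.pow_pos (by norm_num)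
    have hq : d / 3 ^ L < 3 := by
      rw [Nat.div_lt_iff_lt_mul hpos]
      calc d < 3 ^ (L + 1) := hd
        _ = 3 * 3 ^ L := by ring
    obtain ⟨β, hlen, hβ⟩ := ih (d % 3 ^ L) (Nat.mod_lt _ hpos)
    refine ⟨⟨d / 3 ^ L, hq⟩ :: β, by simp [hlen], ?_⟩
    rw [addrLeft_cons, pow_succ]
    have hv : ((⟨d / 3 ^ L, hq⟩ : Fin 3) : ℕ) = d / 3 ^ L := rfl
    rw [hv]
    have hmod := Nat.div_add_mod d (3 ^ L)
    have hcast : ((3:ℝ) ^ L) * ((d / 3 ^ L : ℕ) : ℝ) + ((d % 3 ^ L : ℕ) : ℝ) = (d : ℝ) := by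
      exact_mod_cast congrArg (Nat.cast (R := ℝ)) hmod
    nlinarith [hβ, hcast]

/-! ### Promotion to triadic-linear -/

lemma promote {f : ℝ → ℝ} {α : Address} {L : ℕ} {c : ℝ} {d : ℤ}
    (hd : (d : ℝ) = c * 3 ^ L) (hc0 : 0 ≤ c) (hc1 : c + (1/3:ℝ) ^ L ≤ 1)
    (hlin : ∀ t ∈ Iaddr α, f t = c + (1/3:ℝ) ^ L * psi α t) :
    ∃ β : Address, IsTriadicLinearOn f α β := by
  have h3L : (0:ℝ) < 3 ^ L := by positivity
  have hinv : (1/3:ℝ) ^ L * 3 ^ L = 1 := by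
    rw [one_div, inv_pow, inv_mul_cancel₀ (by positivity)]
  have hd0 : 0 ≤ d := by
    have : (0:ℝ) ≤ (d:ℝ) := hd ▸ mul_nonneg hc0 h3L.le
    exact_mod_cast this
  have hdlt : d < 3 ^ L := by
    have h1 : (d:ℝ) ≤ 3 ^ L - 1 := by
      rw [hd]
      nlinarith
    have : (d:ℝ) < 3 ^ L := by linarith
    exact_mod_cast this
  have hdnat : d.toNat < 3 ^ L := by
    have h1 : (d.toNat : ℤ) < (3:ℤ) ^ L := by rw [Int.toNat_of_nonneg hd0]; exact_mod_cast hdlt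
    exact_mod_cast h1
  obtain ⟨β, hlen, hβ⟩ := exists_address L d.toNat hdnat
  have hcβ : addrLeft β = c := by
    have h1 : ((d.toNat : ℕ) : ℝ) = (d : ℝ) := by
      exact_mod_cast Int.toNat_of_nonneg hd0
    rw [h1, hd] at hβ
    have := mul_right_cancel₀ (ne_of_gt h3L) hβ
    exact this
  have hlβ : addrLen β = (1/3:ℝ) ^ L := by unfold addrLen; rw [hlen]
  refine ⟨β, fun t ht => ?_⟩
  rw [hlin t ht]
  unfold psiInv
  rw [hcβ, hlβ]

lemma half_not_triadic : ¬ IsTriadic (1/2 : ℝ) := by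
  rintro ⟨a, n, hn⟩
  have h3 : (0:ℝ) < 3 ^ n := by positivity
  have : (3:ℝ) ^ n = 2 * a := by
    field_simp at hn
    linarith
  have hz : (3:ℤ) ^ n = 2 * a := by exact_mod_cast this
  have hodd : Odd ((3:ℤ) ^ n) := Odd.pow (by decide)
  rw [hz] at hodd
  exact (Int.not_odd_iff_even.mpr ⟨a, by ring⟩) hodd

lemma odd_pow3 (n : ℕ) : ∃ a : ℤ, (3:ℤ) ^ n = 2 * a + 1 := by
  obtain ⟨a, ha⟩ := Odd.pow (n := n) (by decide : Odd (3:ℤ))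
  exact ⟨a, by linarith⟩

/-! ### The set of central-linearity depths is nonempty -/

lemma leaf_set_nonempty {f : ℝ → ℝ} (hf : IsF3 f) :
    {n : ℕ | ∃ β : Address, IsTriadicLinearOn f (List.replicate n 1) β}.Nonempty := by
  obtain ⟨hid, hbij, hmono, breaks, hbr, hpl⟩ := hf
  have hhalf : (1/2:ℝ) ∈ Icc (0:ℝ) 1 := by norm_num
  have hnb : (1/2:ℝ) ∉ breaks := fun hmem => half_not_triadic (hbr _ hmem)
  obtain ⟨k, c, hcT, hev⟩ := hpl (1/2) hhalf hnb
  obtain ⟨b, j, hc⟩ := hcT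
  rw [Filter.eventually_iff, Metric.mem_nhdsWithin_iff] at hev
  obtain ⟨ε, hε, hball⟩ := hev
  obtain ⟨n₁, hn₁⟩ := exists_pow_lt_of_lt_one hε (by norm_num : (1/3:ℝ) < 1)
  set n := max (k.toNat + j) n₁ with hn
  have hpow : (1/3:ℝ) ^ n < ε := by
    calc (1/3:ℝ) ^ n ≤ (1/3:ℝ) ^ n₁ :=
          pow_le_pow_of_le_one (by norm_num) (by norm_num) (le_max_right _ _)
      _ < ε := hn₁
  set rn : Address := List.replicate n 1 with hrn
  have hA : addrLeft rn = (1 - (1/3:ℝ)^n) / 2 := addrLeft_replicate n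
  have hAlen : addrLen rn = (1/3:ℝ)^n := addrLen_replicate n
  have hLpos : (0:ℝ) < (1/3:ℝ)^n := by positivity
  -- affine formula on I_{1^n}
  have hfI : ∀ t ∈ Iaddr rn, f t = (3:ℝ) ^ k * t + c := by
    intro t ht
    have htI : t ∈ Icc (0:ℝ) 1 := Iaddr_subset_unit rn ht
    have hd : dist t (1/2:ℝ) < ε := by
      rw [Real.dist_eq, abs_lt]
      obtain ⟨h1, h2⟩ := ht
      rw [hA] at h1
      rw [hA, hAlen] at h2
      constructor <;> nlinarith
    exact hball ⟨Metric.mem_ball.mpr hd, htI⟩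
  -- the exponent
  have hkn : k ≤ (n : ℤ) := by
    have h1 : k ≤ (k.toNat : ℤ) := Int.self_le_toNat k
    have h2 : k.toNat ≤ n := le_trans (Nat.le_add_right _ _) (le_max_left _ _)
    exact le_trans h1 (by exact_mod_cast h2)
  set L : ℕ := ((n : ℤ) - k).toNat with hL
  have hLZ : (L : ℤ) = (n : ℤ) - k := Int.toNat_of_nonneg (by omega)
  have hslope : (1/3:ℝ) ^ L = (3:ℝ) ^ k * (1/3:ℝ) ^ n := by
    have h3 : (3:ℝ) ≠ 0 := by norm_num
    have e1 : (1/3:ℝ) ^ L = (3:ℝ) ^ (-(L:ℤ)) := by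
      rw [zpow_neg, zpow_natCast, one_div, inv_pow]
    have e2 : (1/3:ℝ) ^ n = (3:ℝ) ^ (-(n:ℤ)) := by
      rw [zpow_neg, zpow_natCast, one_div, inv_pow]
    rw [e1, e2, ← zpow_add₀ h3, hLZ]
    ring_nf
  set c' : ℝ := (3:ℝ) ^ k * addrLeft rn + c with hc'
  have hform : ∀ t ∈ Iaddr rn, f t = c' + (1/3:ℝ) ^ L * psi rn t := by
    intro t ht
    rw [hfI t ht, hc', hslope]
    unfold psi
    rw [hAlen]
    field_simp
    ring
  -- endpoints
  have hmemA : addrLeft rn ∈ Iaddr rn := by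
    rw [mem_Iaddr_iff, psi_left]; norm_num
  have hmemB : addrLeft rn + addrLen rn ∈ Iaddr rn := by
    rw [mem_Iaddr_iff, psi_right]; norm_num
  have hfA : f (addrLeft rn) = c' := by
    rw [hform _ hmemA, psi_left]; ring
  have hfB : f (addrLeft rn + addrLen rn) = c' + (1/3:ℝ)^L := by
    rw [hform _ hmemB, psi_right]; ring
  have hA01 : f (addrLeft rn) ∈ Icc (0:ℝ) 1 := hbij.mapsTo (Iaddr_subset_unit rn hmemA)
  have hB01 : f (addrLeft rn + addrLen rn) ∈ Icc (0:ℝ) 1 := hbij.mapsTo (Iaddr_subset_unit rn hmemB)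
  have hc0 : 0 ≤ c' := hfA ▸ hA01.1
  have hc1 : c' + (1/3:ℝ)^L ≤ 1 := hfB ▸ hB01.2
  -- integrality
  have hjL : j ≤ L := by omega
  obtain ⟨a, ha⟩ := odd_pow3 n
  have hdR : ((a + b * 3 ^ (L - j) : ℤ) : ℝ) = c' * 3 ^ L := by
    have haR : ((a:ℝ)) = ((3:ℝ)^n - 1) / 2 := by
      have h2 : ((3:ℝ))^n = 2*(a:ℝ)+1 := by exact_mod_cast ha
      linarith
    have h3kL : (3:ℝ) ^ k * 3 ^ L = 3 ^ n := by
      have h3 : (3:ℝ) ≠ 0 := by norm_num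
      have : (3:ℝ) ^ L = (3:ℝ) ^ (L:ℤ) := by rw [zpow_natCast]
      rw [this, ← zpow_add₀ h3, hLZ]
      have : k + ((n:ℤ) - k) = (n:ℤ) := by ring
      rw [this, zpow_natCast]
    have hLj : (3:ℝ) ^ (L - j) * 3 ^ j = 3 ^ L := by
      rw [← pow_add, Nat.sub_add_cancel hjL]
    have h3j : (0:ℝ) < 3 ^ j := by positivity
    have h3n1 : (1/3:ℝ)^n * 3^n = 1 := by
      rw [one_div, inv_pow, inv_mul_cancel₀ (by positivity)]
    push_cast
    rw [hc', hc, hA]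
    have expand : ((3:ℝ) ^ k * ((1 - (1/3:ℝ)^n)/2) + (b:ℝ)/3^j) * 3 ^ L
        = (3^k * 3^L) * ((1 - (1/3:ℝ)^n)/2) + (b:ℝ) * (3^L / 3^j) := by ring
    rw [expand, h3kL]
    rw [haR]
    have : (3:ℝ)^L / 3^j = 3^(L-j) := by
      rw [← hLj]; field_simp
    rw [this]
    nlinarith [h3n1]
  obtain ⟨β, hβ⟩ := promote hdR hc0 hc1 hform
  exact ⟨n, β, hβ⟩

/-! ### Diamond computations -/

lemma diam_outside {g f : ℝ → ℝ} {t : ℝ} (ht : t ∉ Iaddr (centralLeaf g)) :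
    diam g f t = g t := by
  unfold diam phi; rw [if_neg ht]

lemma diam_inside {g f : ℝ → ℝ} (hf : IsF3 f) {β : Address}
    (hβ : IsTriadicLinearOn g (centralLeaf g) β) {t : ℝ}
    (ht : t ∈ Iaddr (centralLeaf g)) :
    diam g f t = psiInv β (f (psi (centralLeaf g) t)) := by
  set α := centralLeaf g
  have h1 : psi α t ∈ Icc (0:ℝ) 1 := (mem_Iaddr_iff α t).mp ht
  have h2 : f (psi α t) ∈ Icc (0:ℝ) 1 := hf.2.1.mapsTo h1
  have h3 : psiInv α (f (psi α t)) ∈ Iaddr α := psiInv_mem α h2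
  unfold diam phi
  rw [if_pos ht, hβ _ h3, psi_psiInv]

lemma triadicLinear_mem_Icc {g : ℝ → ℝ} {α β : Address} (hβ : IsTriadicLinearOn g α β)
    {t : ℝ} (ht : t ∈ Iaddr α) : g t ∈ Iaddr β := by
  rw [hβ t ht]
  exact psiInv_mem β ((mem_Iaddr_iff α t).mp ht)

lemma psiInv_psi_affine (β α : Address) (t : ℝ) :
    psiInv β (psi α t) =
      (addrLeft β - addrLen β * addrLeft α / addrLen α) + (addrLen β / addrLen α) * t := by
  unfold psiInv psi
  field_simp [addrLen_ne α]
  ring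

/-- Two affine maps agreeing at two distinct points agree everywhere. -/
lemma affine_eq {p1 q1 p2 q2 a b : ℝ} (hab : a ≠ b)
    (h1 : p1 + q1 * a = p2 + q2 * a) (h2 : p1 + q1 * b = p2 + q2 * b) (t : ℝ) :
    p1 + q1 * t = p2 + q2 * t := by
  have hkey : (q1 - q2) * (a - b) = 0 := by linear_combination h1 - h2
  rcases mul_eq_zero.mp hkey with h' | h'
  · have hq : q1 = q2 := by linarith
    rw [hq] at h1 ⊢
    have : p1 = p2 := by linarith
    rw [this]
  · exact absurd (by linarith : a = b) hab

set_option maxHeartbeats 2000000 in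
/-- The central depth of a diamond product is the sum of the central depths. -/
lemma leafExp_diam {g f : ℝ → ℝ} (hg : IsF3 g) (hf : IsF3 f) :
    leafExp 1 (diam g f) = leafExp 1 g + leafExp 1 f := by
  classical
  set m := leafExp 1 g with hm
  set p := leafExp 1 f with hp
  set rm : Address := List.replicate m 1 with hrm
  have hcg : centralLeaf g = rm := rfl
  have hSg := leaf_set_nonempty hg
  have hSf := leaf_set_nonempty hf
  obtain ⟨β, hβ⟩ : ∃ β, IsTriadicLinearOn g rm β := Nat.sInf_mem hSg
  obtain ⟨δ, hδ⟩ : ∃ δ, IsTriadicLinearOn f (List.replicate p 1) δ := Nat.sInf_mem hSf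
  have hsplit : List.replicate (m + p) (1 : Fin 3) = rm ++ List.replicate p 1 :=
    List.replicate_add m p 1
  have hupper : IsTriadicLinearOn (diam g f) (List.replicate (m+p) 1) (β ++ δ) := by
    intro t ht
    rw [hsplit] at ht ⊢
    have ht1 : t ∈ Iaddr rm := Iaddr_append_subset _ _ ht
    have ht2 : psi rm t ∈ Iaddr (List.replicate p 1) := (mem_Iaddr_append _ _ t).mp ht
    rw [show diam g f t = psiInv β (f (psi rm t)) from diam_inside hf (hcg ▸ hβ) (hcg ▸ ht1)]
    rw [hδ _ ht2, ← psiInv_append, ← psi_append]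
  have hNle : leafExp 1 (diam g f) ≤ m + p := Nat.sInf_le ⟨β ++ δ, hupper⟩
  set N := leafExp 1 (diam g f) with hN
  have hSd : {n : ℕ | ∃ ε : Address,
      IsTriadicLinearOn (diam g f) (List.replicate n 1) ε}.Nonempty :=
    ⟨m + p, β ++ δ, hupper⟩
  obtain ⟨ε, hε⟩ : ∃ ε, IsTriadicLinearOn (diam g f) (List.replicate N 1) ε :=
    Nat.sInf_mem hSd
  -- record minimality before making everything opaque
  have hmle : ∀ (n' : ℕ) (β' : Address),
      IsTriadicLinearOn g (List.replicate n' 1) β' → m ≤ n' :=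
    fun n' β' hb => Nat.sInf_le ⟨β', hb⟩
  have hple : ∀ (n' : ℕ) (β' : Address),
      IsTriadicLinearOn f (List.replicate n' 1) β' → p ≤ n' :=
    fun n' β' hb => Nat.sInf_le ⟨β', hb⟩
  clear_value m p N
  clear hSg hSf hSd hN hm hp
  have hge : m + p ≤ N := by
    by_contra hlt
    push_neg at hlt
    rcases lt_or_ge N m with hNm | hmN
    · -- Case N < m : g would be triadic-linear at depth N < m
      set rN : Address := List.replicate N 1 with hrN
      -- affine descriptions
      obtain ⟨q1, p1, hq1, hP1⟩ : ∃ q1 p1 : ℝ, 0 < q1 ∧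
          ∀ t, psiInv ε (psi rN t) = p1 + q1 * t :=
        ⟨addrLen ε / addrLen rN, addrLeft ε - addrLen ε * addrLeft rN / addrLen rN,
          div_pos (addrLen_pos ε) (addrLen_pos rN), fun t => psiInv_psi_affine ε rN t⟩
      obtain ⟨q2, p2, hq2, hP2⟩ : ∃ q2 p2 : ℝ, 0 < q2 ∧
          ∀ t, psiInv β (psi rm t) = p2 + q2 * t :=
        ⟨addrLen β / addrLen rm, addrLeft β - addrLen β * addrLeft rm / addrLen rm,
          div_pos (addrLen_pos β) (addrLen_pos rm), fun t => psiInv_psi_affine β rm t⟩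
      set aN := addrLeft rN with haN
      set lN := addrLen rN with hlN
      set am := addrLeft rm with ham
      set lm := addrLen rm with hlm
      have hIN : ∀ t : ℝ, t ∈ Iaddr rN ↔ aN ≤ t ∧ t ≤ aN + lN := fun t => Set.mem_Icc
      have hIm : ∀ t : ℝ, t ∈ Iaddr rm ↔ am ≤ t ∧ t ≤ am + lm := fun t => Set.mem_Icc
      have hlNpos : 0 < lN := addrLen_pos rN
      have hlmpos : 0 < lm := addrLen_pos rm
      have hpowlt : (1/3:ℝ)^m < (1/3:ℝ)^N :=
        pow_lt_pow_right_of_lt_one₀ (by norm_num) (by norm_num) hNm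
      have haNam : aN < am := by
        rw [haN, ham, hrN, hrm, addrLeft_replicate, addrLeft_replicate]
        linarith
      have hbmN : am + lm < aN + lN := by
        rw [haN, ham, hrN, hrm, hlN, hlm, addrLeft_replicate, addrLeft_replicate,
          addrLen_replicate, addrLen_replicate]
        linarith
      have hamI : am ∈ Iaddr rm := by rw [mem_Iaddr_iff, ham, psi_left]; norm_num
      have hbmI : am + lm ∈ Iaddr rm := by
        rw [mem_Iaddr_iff, ham, hlm, psi_right]; norm_num
      have haNI : aN ∈ Iaddr rN := by rw [mem_Iaddr_iff, haN, psi_left]; norm_num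
      have hbNI : aN + lN ∈ Iaddr rN := by
        rw [mem_Iaddr_iff, haN, hlN, psi_right]; norm_num
      have hamIcc : am ∈ Icc (0:ℝ) 1 := Iaddr_subset_unit rm hamI
      have hbmIcc : am + lm ∈ Icc (0:ℝ) 1 := Iaddr_subset_unit rm hbmI
      have haNIcc : aN ∈ Icc (0:ℝ) 1 := Iaddr_subset_unit rN haNI
      have hbNIcc : aN + lN ∈ Icc (0:ℝ) 1 := Iaddr_subset_unit rN hbNI
      clear_value aN lN am lm
      clear haN hlN ham hlm
      have hmono := hg.2.2.1
      have hmaps := hg.2.1.mapsTo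
      have hsurj := hg.2.1.surjOn
      -- g agrees with the affine map p1 + q1 * t on I_N \ I_m
      have hgN : ∀ s, s ∈ Iaddr rN → s ∉ Iaddr rm → g s = p1 + q1 * s := by
        intro s hs1 hs2
        have heq := hε s hs1
        rw [diam_outside (hcg ▸ hs2)] at heq
        rw [heq, hP1]
      have hgam : g am = p2 + q2 * am := by rw [hβ _ hamI, hP2]
      have hgbm : g (am + lm) = p2 + q2 * (am + lm) := by rw [hβ _ hbmI, hP2]
      have hgaN : g aN = p1 + q1 * aN := by
        apply hgN aN haNI
        rw [hIm]
        intro hmem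
        exact absurd hmem.1 (by linarith)
      have hgbN : g (aN + lN) = p1 + q1 * (aN + lN) := by
        apply hgN _ hbNI
        rw [hIm]
        intro hmem
        exact absurd hmem.2 (by linarith)
      have hgam01 : g am ∈ Icc (0:ℝ) 1 := hmaps hamIcc
      have hgbm01 : g (am + lm) ∈ Icc (0:ℝ) 1 := hmaps hbmIcc
      have hgaN01 : g aN ∈ Icc (0:ℝ) 1 := hmaps haNIcc
      have hgbN01 : g (aN + lN) ∈ Icc (0:ℝ) 1 := hmaps hbNIcc
      -- key equalities at the endpoints of I_m
      have E1 : p1 + q1 * am = p2 + q2 * am := by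
        rcases lt_trichotomy (p1 + q1 * am) (p2 + q2 * am) with hlt1 | heq | hlt1
        · exfalso
          have h1 : p1 + q1 * aN ≤ p1 + q1 * am := by nlinarith
          have h2 : 0 ≤ p1 + q1 * aN := hgaN ▸ hgaN01.1
          have h3 : 0 ≤ p2 + q2 * am := hgam ▸ hgam01.1
          have h4 : p2 + q2 * am ≤ 1 := hgam ▸ hgam01.2
          set v := ((p1 + q1 * am) + (p2 + q2 * am)) / 2 with hv
          clear_value v
          have hv0 : 0 ≤ v := by linarith
          have hv1 : v ≤ 1 := by linarith
          obtain ⟨s, hsIcc, hgs⟩ := hsurj ⟨hv0, hv1⟩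
          have hsam : s < am := by
            by_contra hge'
            push_neg at hge'
            have := hmono.monotoneOn hamIcc hsIcc hge'
            rw [hgam, hgs] at this
            linarith
          have hsaN : aN < s := by
            by_contra hle'
            push_neg at hle'
            have := hmono.monotoneOn hsIcc haNIcc hle'
            rw [hgaN, hgs] at this
            linarith
          have hsIN : s ∈ Iaddr rN := (hIN s).mpr ⟨hsaN.le, by linarith⟩
          have hsnm : s ∉ Iaddr rm := by
            rw [hIm]; intro hmem; exact absurd hmem.1 (by linarith)
          have hval := hgN s hsIN hsnm
          rw [hgs] at hval
          have : q1 * s < q1 * am := by nlinarith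
          linarith
        · exact heq
        · exfalso
          set d0 := min ((p1 + q1 * am - (p2 + q2 * am)) / (2 * q1)) ((am - aN)/2) with hd0
          have hd0pos : 0 < d0 := by
            apply lt_min
            · apply div_pos (by linarith) (by linarith)
            · linarith
          have hd0a : d0 ≤ (p1 + q1 * am - (p2 + q2 * am)) / (2 * q1) := min_le_left _ _
          have hd0b : d0 ≤ (am - aN)/2 := min_le_right _ _
          have hbound : q1 * d0 ≤ (p1 + q1 * am - (p2 + q2 * am)) / 2 := by
            calc q1 * d0 ≤ q1 * ((p1 + q1 * am - (p2 + q2 * am)) / (2 * q1)) :=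
                  mul_le_mul_of_nonneg_left hd0a hq1.le
              _ = (p1 + q1 * am - (p2 + q2 * am)) / 2 := by
                  field_simp
          clear_value d0
          set t := am - d0 with htdef
          clear_value t
          have htaN : aN ≤ t := by rw [htdef]; linarith
          have htbN : t ≤ aN + lN := by rw [htdef]; linarith
          have htIcc : t ∈ Icc (0:ℝ) 1 :=
            ⟨le_trans haNIcc.1 htaN, by rw [htdef]; linarith [hamIcc.2]⟩
          have htnm : t ∉ Iaddr rm := by
            rw [hIm]; intro hmem; exact absurd hmem.1 (by rw [htdef] at *; linarith)
          have hgt : g t = p1 + q1 * t := hgN t ((hIN t).mpr ⟨htaN, htbN⟩) htnm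
          have hlt2 : g t < g am := hmono htIcc hamIcc (by rw [htdef]; linarith)
          rw [hgt, hgam, htdef] at hlt2
          nlinarith
      have E2 : p1 + q1 * (am + lm) = p2 + q2 * (am + lm) := by
        rcases lt_trichotomy (p1 + q1 * (am + lm)) (p2 + q2 * (am + lm)) with hlt1 | heq | hlt1
        · exfalso
          set d0 := min (((p2 + q2 * (am + lm)) - (p1 + q1 * (am + lm))) / (2 * q1))
            ((aN + lN - (am + lm))/2) with hd0
          have hd0pos : 0 < d0 := by
            apply lt_min
            · apply div_pos (by linarith) (by linarith)
            · linarith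
          have hd0a : d0 ≤ ((p2 + q2 * (am + lm)) - (p1 + q1 * (am + lm))) / (2 * q1) :=
            min_le_left _ _
          have hd0b : d0 ≤ (aN + lN - (am + lm))/2 := min_le_right _ _
          have hbound : q1 * d0 ≤ ((p2 + q2 * (am + lm)) - (p1 + q1 * (am + lm))) / 2 := by
            calc q1 * d0 ≤ q1 * (((p2 + q2 * (am + lm)) - (p1 + q1 * (am + lm))) / (2 * q1)) :=
                  mul_le_mul_of_nonneg_left hd0a hq1.le
              _ = ((p2 + q2 * (am + lm)) - (p1 + q1 * (am + lm))) / 2 := by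
                  field_simp
          clear_value d0
          set t := am + lm + d0 with htdef
          clear_value t
          have htaN : aN ≤ t := by rw [htdef]; linarith
          have htbN : t ≤ aN + lN := by rw [htdef]; linarith
          have htIcc : t ∈ Icc (0:ℝ) 1 :=
            ⟨by rw [htdef]; linarith [hbmIcc.1], le_trans htbN hbNIcc.2⟩
          have htnm : t ∉ Iaddr rm := by
            rw [hIm]; intro hmem; exact absurd hmem.2 (by rw [htdef] at *; linarith)
          have hgt : g t = p1 + q1 * t := hgN t ((hIN t).mpr ⟨htaN, htbN⟩) htnm
          have hlt2 : g (am + lm) < g t := hmono hbmIcc htIcc (by rw [htdef]; linarith)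
          rw [hgt, hgbm, htdef] at hlt2
          nlinarith
        · exact heq
        · exfalso
          have h1 : p1 + q1 * (am + lm) ≤ p1 + q1 * (aN + lN) := by nlinarith
          have h2 : p1 + q1 * (aN + lN) ≤ 1 := hgbN ▸ hgbN01.2
          have h3 : 0 ≤ p2 + q2 * (am + lm) := hgbm ▸ hgbm01.1
          set v := ((p2 + q2 * (am + lm)) + (p1 + q1 * (am + lm))) / 2 with hv
          clear_value v
          have hv0 : 0 ≤ v := by linarith
          have hv1 : v ≤ 1 := by linarith
          obtain ⟨s, hsIcc, hgs⟩ := hsurj ⟨hv0, hv1⟩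
          have hsbm : am + lm < s := by
            by_contra hge'
            push_neg at hge'
            have := hmono.monotoneOn hsIcc hbmIcc hge'
            rw [hgbm, hgs] at this
            linarith
          have hsbN : s < aN + lN := by
            by_contra hle'
            push_neg at hle'
            have := hmono.monotoneOn hbNIcc hsIcc hle'
            rw [hgbN, hgs] at this
            linarith
          have hsIN : s ∈ Iaddr rN := (hIN s).mpr ⟨by linarith, hsbN.le⟩
          have hsnm : s ∉ Iaddr rm := by
            rw [hIm]; intro hmem; exact absurd hmem.2 (by linarith)
          have hval := hgN s hsIN hsnm
          rw [hgs] at hval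
          have : q1 * (am + lm) < q1 * s := by nlinarith
          linarith
      -- conclude: g is triadic-linear at depth N < m, contradiction
      have hlin : IsTriadicLinearOn g rN ε := by
        intro t ht
        rw [hP1]
        by_cases htm : t ∈ Iaddr rm
        · rw [hβ _ htm, hP2]
          exact affine_eq (by linarith : am ≠ am + lm) E1.symm E2.symm t
        · exact hgN t ht htm
      have : m ≤ N := hmle N ε hlin
      omega
    · -- Case m ≤ N < m + p : f would be triadic-linear at depth N - m < p
      set qq := N - m with hqq
      have hNeq : N = m + qq := by omega
      have hqp : qq < p := by omega
      set rq : Address := List.replicate qq 1 with hrq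
      have hsplitN : List.replicate N (1 : Fin 3) = rm ++ rq := by
        rw [hNeq]; exact List.replicate_add m qq 1
      have hfu : ∀ u ∈ Iaddr rq, f u =
          (addrLeft ε - addrLeft β) / addrLen β + addrLen ε / addrLen β * psi rq u := by
        intro u hu
        have hpsit : psi rm (psiInv rm u) = u := psi_psiInv rm u
        have htm : psiInv rm u ∈ Iaddr rm := psiInv_mem rm (Iaddr_subset_unit rq hu)
        have htN : psiInv rm u ∈ Iaddr (List.replicate N 1) := by
          rw [hsplitN, mem_Iaddr_append, hpsit]; exact hu
        have heq := hε (psiInv rm u) htN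
        rw [diam_inside hf (hcg ▸ hβ) (hcg ▸ htm), hcg, hpsit] at heq
        have hpsiN : psi (List.replicate N 1) (psiInv rm u) = psi rq u := by
          rw [hsplitN, psi_append, hpsit]
        rw [hpsiN] at heq
        unfold psiInv at heq
        have hlbne := addrLen_ne β
        field_simp
        linarith [heq]
      obtain ⟨s0, c0, hs0v, hc0v, hs0pos, hfu'⟩ : ∃ s0 c0 : ℝ,
          s0 = addrLen ε / addrLen β ∧ c0 = (addrLeft ε - addrLeft β) / addrLen β ∧
          0 < s0 ∧ ∀ u ∈ Iaddr rq, f u = c0 + s0 * psi rq u :=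
        ⟨_, _, rfl, rfl, div_pos (addrLen_pos ε) (addrLen_pos β), hfu⟩
      -- endpoints of I_q
      have hu0 : addrLeft rq ∈ Iaddr rq := by rw [mem_Iaddr_iff, psi_left]; norm_num
      have hu1 : addrLeft rq + addrLen rq ∈ Iaddr rq := by
        rw [mem_Iaddr_iff, psi_right]; norm_num
      have hf0 : f (addrLeft rq) = c0 := by rw [hfu' _ hu0, psi_left]; ring
      have hf1 : f (addrLeft rq + addrLen rq) = c0 + s0 := by rw [hfu' _ hu1, psi_right]; ring
      have h01 : f (addrLeft rq) ∈ Icc (0:ℝ) 1 := hf.2.1.mapsTo (Iaddr_subset_unit rq hu0)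
      have h11 : f (addrLeft rq + addrLen rq) ∈ Icc (0:ℝ) 1 :=
        hf.2.1.mapsTo (Iaddr_subset_unit rq hu1)
      have hc00 : 0 ≤ c0 := hf0 ▸ h01.1
      have hc01 : c0 + s0 ≤ 1 := hf1 ▸ h11.2
      -- slope is a nonpositive power of 3
      have hLβε : β.length ≤ ε.length := by
        by_contra hlt'
        push_neg at hlt'
        have h1 : addrLen β < addrLen ε :=
          pow_lt_pow_right_of_lt_one₀ (by norm_num) (by norm_num) hlt'
        have h2 : 1 < s0 := by
          rw [hs0v]
          exact (one_lt_div (addrLen_pos β)).mpr h1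
        linarith
      set L := ε.length - β.length with hLdef
      have hLeq : ε.length = β.length + L := by omega
      have hsL : s0 = (1/3:ℝ) ^ L := by
        rw [hs0v]
        unfold addrLen
        rw [hLeq, pow_add]
        field_simp
      -- integrality
      obtain ⟨dε, hdε⟩ := addrLeft_mul_pow ε
      obtain ⟨dβ, hdβ⟩ := addrLeft_mul_pow β
      have hlβ3 : addrLen β * 3 ^ β.length = 1 := by
        unfold addrLen
        rw [one_div, inv_pow, inv_mul_cancel₀ (by positivity)]
      have h3split : (3:ℝ) ^ β.length * 3 ^ L = 3 ^ ε.length := by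
        rw [hLeq, pow_add]
      have h2 : c0 * addrLen β = addrLeft ε - addrLeft β := by
        rw [hc0v, div_mul_cancel₀ _ (addrLen_ne β)]
      have hdR : (((dε : ℤ) - (dβ : ℤ) * 3 ^ L : ℤ) : ℝ) = c0 * 3 ^ L := by
        push_cast
        rw [← hdε, ← hdβ]
        linear_combination (- addrLeft ε) * h3split - ((3:ℝ) ^ β.length * 3 ^ L) * h2
          + (c0 * 3 ^ L) * hlβ3
      have hfin : ∀ u ∈ Iaddr rq, f u = c0 + (1/3:ℝ)^L * psi rq u := by
        intro u hu; rw [hfu' u hu, hsL]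
      obtain ⟨β', hβ'⟩ := promote hdR hc00 (by rw [← hsL]; exact hc01) hfin
      have : p ≤ qq := hple qq β' hβ'
      omega
  omega

/-- the central monoid `(F₃, ⋄)` is cancellative. -/
theorem diam_cancellative (f g h : ℝ → ℝ) (hf : IsF3 f) (hg : IsF3 g) (hh : IsF3 h) :
    (diam f g = diam f h → g = h) ∧ (diam g f = diam h f → g = h) := by
  constructor
  · -- left cancellation
    intro heq
    have hinj : ∀ x y : ℝ, f x = f y → x = y := by
      intro x y hxy
      by_cases hx : x ∈ Icc (0:ℝ) 1 <;> by_cases hy : y ∈ Icc (0:ℝ) 1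
      · exact hf.2.1.injOn hx hy hxy
      · exfalso
        have hmem := hf.2.1.mapsTo hx
        rw [hxy, hf.1 y hy] at hmem
        exact hy hmem
      · exfalso
        have hmem := hf.2.1.mapsTo hy
        rw [← hxy, hf.1 x hx] at hmem
        exact hx hmem
      · calc x = f x := (hf.1 x hx).symm
          _ = f y := hxy
          _ = y := hf.1 y hy
    have hphi : ∀ t, phi (centralLeaf f) g t = phi (centralLeaf f) h t :=
      fun t => hinj _ _ (congrFun heq t)
    funext s
    by_cases hs : s ∈ Icc (0:ℝ) 1
    · have hmem : psiInv (centralLeaf f) s ∈ Iaddr (centralLeaf f) := psiInv_mem _ hs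
      have hp := hphi (psiInv (centralLeaf f) s)
      unfold phi at hp
      rw [if_pos hmem, if_pos hmem, psi_psiInv] at hp
      unfold psiInv at hp
      have hc : addrLen (centralLeaf f) * g s = addrLen (centralLeaf f) * h s := by linarith
      exact mul_left_cancel₀ (addrLen_ne (centralLeaf f)) hc
    · rw [hg.1 s hs, hh.1 s hs]
  · -- right cancellation
    intro heq
    have hmn : leafExp 1 g = leafExp 1 h := by
      have h1 := leafExp_diam hg hf
      have h2 := leafExp_diam hh hf
      rw [heq] at h1
      omega
    have hch : centralLeaf h = centralLeaf g := by unfold centralLeaf; rw [hmn]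
    obtain ⟨β, hβ⟩ : ∃ β, IsTriadicLinearOn g (centralLeaf g) β :=
      Nat.sInf_mem (leaf_set_nonempty hg)
    obtain ⟨γ, hγ⟩ : ∃ γ, IsTriadicLinearOn h (centralLeaf h) γ :=
      Nat.sInf_mem (leaf_set_nonempty hh)
    have hγ' : IsTriadicLinearOn h (centralLeaf g) γ := by rw [← hch]; exact hγ
    have key : ∀ x ∈ Icc (0:ℝ) 1, psiInv β x = psiInv γ x := by
      intro x hx
      obtain ⟨u, hu, hfu⟩ := hf.2.1.surjOn hx
      have htm : psiInv (centralLeaf g) u ∈ Iaddr (centralLeaf g) := psiInv_mem _ hu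
      have e1 : diam g f (psiInv (centralLeaf g) u) = psiInv β x := by
        rw [diam_inside hf hβ htm, psi_psiInv, hfu]
      have e2 : diam h f (psiInv (centralLeaf g) u) = psiInv γ x := by
        have htm' : psiInv (centralLeaf g) u ∈ Iaddr (centralLeaf h) := by rw [hch]; exact htm
        rw [diam_inside hf hγ htm', hch, psi_psiInv, hfu]
      rw [← e1, ← e2, heq]
    funext t
    by_cases ht : t ∈ Iaddr (centralLeaf g)
    · rw [hβ _ ht, hγ' _ ht]
      exact key _ ((mem_Iaddr_iff (centralLeaf g) t).mp ht)
    · have hpt := congrFun heq t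
      unfold diam phi at hpt
      rw [hch, if_neg ht] at hpt
      exact hpt
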